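/- arXiv:1707.09214 — 2 statements merged into one kernel-verified Lean document; each statement's English description precedes it below -/
import Mathlib

section
/- Let r ≥ 1 and let A ⊆ Q_d be a set that percolates under r-neighbour bootstrap percolation; for each vertex v let t_v = min{t : v ∈ A_t} be its infection time. Then the number of edges {u,v} of the hypercube with |t_v − t_u| ≥ 2 is at most (r−1)·2^d. -/
/-- A vertex of the `d`-dimensional hypercube `{0,1}^d`. -/
abbrev Cube (d : ℕ) := Fin d → Bool

/-- One step of `r`-neighbour bootstrap percolation on `Q_d`: a vertex becomes infected
if it has at least `r` infected neighbours (neighbours = Hamming distance 1). -/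
noncomputable def bootStep (d r : ℕ) (A : Set (Cube d)) : Set (Cube d) :=
  A ∪ {v | r ≤ {u : Cube d | hammingDist u v = 1 ∧ u ∈ A}.ncard}

/-- The set of infected sites at time `t`, starting from `A`. -/
noncomputable def boot (d r : ℕ) (A : Set (Cube d)) : ℕ → Set (Cube d)
  | 0 => A
  | t + 1 => bootStep d r (boot d r A t)

/-- `A` percolates: eventually every vertex is infected. -/
def Percolates (d r : ℕ) (A : Set (Cube d)) : Prop :=
  ∃ t, boot d r A t = Set.univ

/-- The percolation time of `A`: the least `t` with all sites infected. -/
noncomputable def percTime (d r : ℕ) (A : Set (Cube d)) : ℕ :=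
  sInf {t | boot d r A t = Set.univ}

/-- `M_r(d)`: the maximal percolation time over percolating subsets of `Q_d`. -/
noncomputable def maxPercTime (d r : ℕ) : ℕ :=
  sSup {T | ∃ A : Set (Cube d), Percolates d r A ∧ percTime d r A = T}

/-- The infection time `t_v` of a vertex `v`. -/
noncomputable def infTime (d r : ℕ) (A : Set (Cube d)) (v : Cube d) : ℕ :=
  sInf {t | v ∈ boot d r A t}

/-- A `k`-snake of length `T` in `Q_d`: a path `S_0, …, S_T` (consecutive vertices at
Hamming distance 1, all vertices distinct) such that `d(S_t, S_{t'}) ≥ k` whenever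
`t' − t ≥ k`. -/
def IsSnake (d k T : ℕ) (S : ℕ → Cube d) : Prop :=
  (∀ t, t < T → hammingDist (S t) (S (t + 1)) = 1) ∧
  (∀ t t', t ≤ T → t' ≤ T → S t = S t' → t = t') ∧
  (∀ t t', t' ≤ T → t + k ≤ t' → k ≤ hammingDist (S t) (S t'))

/-- `s(d)`: the maximal length of a `3`-snake in `Q_d`. -/
noncomputable def snakeMax (d : ℕ) : ℕ :=
  sSup {T | ∃ S : ℕ → Cube d, IsSnake d 3 T S}

/-- `‖x‖`: the number of `1`-coordinates of `x`. -/
def wt {d : ℕ} (x : Cube d) : ℕ := hammingDist x (fun _ => false)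

/-- The vertex of `Q_d` whose `1`-coordinates are exactly the positions in `s`
(0-indexed). -/
def ofOnes (d : ℕ) (s : Finset ℕ) : Cube d := fun i => decide (i.val ∈ s)

/-- `(b, a)`: the vertex of `Q_d` with first coordinate `b` and remaining coordinates `a`. -/
def extendCube (d : ℕ) (b : Bool) (a : Cube (d - 1)) : Cube d :=
  fun i => if h : i.val = 0 then b else a ⟨i.val - 1, by have := i.isLt; omega⟩

/-- `(y, x)`: the vertex of `Q_d` whose first `9` coordinates have `1`s exactly at the
(0-indexed) positions in `ys ⊆ {0,…,8}` and whose last `d − 9` coordinates are `x`. -/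
def embed9 (d : ℕ) (ys : Finset ℕ) (x : Cube (d - 9)) : Cube d :=
  fun i => if h : i.val < 9 then decide (i.val ∈ ys) else x ⟨i.val - 9, by have := i.isLt; omega⟩

/-- `J_1 = [1,1][*]^{d-2}`: vertices whose first two coordinates are `1`. -/
def J1 (d : ℕ) : Set (Cube d) := {x | ∀ i : Fin d, i.val < 2 → x i = true}

/-- `J_2`: the two vertices whose only `1`-coordinates are coordinate 3 together with
exactly one of coordinates 1 and 2 (1-indexed). -/
def J2 (d : ℕ) : Set (Cube d) := {ofOnes d {0, 2}, ofOnes d {1, 2}}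

/-- `J_3`: vertices with `(x_1,x_2,x_3) ∈ {(0,1,0),(1,0,0)}` whose last `d' = d-3`
coordinates form the word `0^{2l} 1 1 0^{d'-2-2l}` for some `0 ≤ l ≤ (d'-2)/2`. -/
def J3 (d : ℕ) : Set (Cube d) :=
  {x | ∃ l : ℕ, 2 * l + 2 ≤ d - 3 ∧
    (x = ofOnes d {0, 3 + 2 * l, 4 + 2 * l} ∨ x = ofOnes d {1, 3 + 2 * l, 4 + 2 * l})}

/-- The five snake conditions of Lemma 3 (for a `3`-snake of length `T` in `Q_{d''}`). -/
def SnakeConds (d'' T : ℕ) (S : ℕ → Cube d'') : Prop :=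
  S T = ofOnes d'' ∅ ∧ S (T - 1) = ofOnes d'' {0} ∧ S (T - 2) = ofOnes d'' {0, 2} ∧
  S (T - 3) = ofOnes d'' {0, 2, 4} ∧ ∀ t, t < T - 3 → 3 < wt (S t)

/-- `S^i = {S_{T-i-3j} : j ≥ 0, T-i-3j ≥ 0}`. -/
def SnakeTail (d'' T : ℕ) (S : ℕ → Cube d'') (i : ℕ) : Set (Cube d'') :=
  {x | ∃ j : ℕ, 3 * j + i ≤ T ∧ x = S (T - i - 3 * j)}

/-- `I_0`: vertices whose last `d'' = d - 9` coordinates belong to `S^i` for some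
`i ∈ {1,2,3}` and whose first `9` coordinates are all `0` except exactly one of the two
coordinates in (1-indexed) positions `2i+2` and `2i+3`, which equals `1`. -/
def I0 (d T : ℕ) (S : ℕ → Cube (d - 9)) : Set (Cube d) :=
  {v | ∃ i ∈ ({1, 2, 3} : Set ℕ), ∃ x ∈ SnakeTail (d - 9) T S i,
    v = embed9 d {2 * i + 1} x ∨ v = embed9 d {2 * i + 2} x}

lemma boot_mono (d r : ℕ) (A : Set (Cube d)) : Monotone (boot d r A) := by
  apply monotone_nat_of_le_succ
  intro t
  exact Set.subset_union_left

/-- If `A` percolates under `r`-neighbour bootstrap percolation, the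
number of edges `{u,v}` of the hypercube with `|t_v − t_u| ≥ 2` is at most `(r−1)·2^d`. -/
theorem stmt9 (d r : ℕ) (hr : 1 ≤ r) (A : Set (Cube d)) (hA : Percolates d r A) :
    {e : Sym2 (Cube d) | ∃ u v : Cube d, e = s(u, v) ∧ hammingDist u v = 1 ∧
        (infTime d r A u + 2 ≤ infTime d r A v ∨
          infTime d r A v + 2 ≤ infTime d r A u)}.ncard
      ≤ (r - 1) * 2 ^ d := by
  classical
  set T := infTime d r A with hT
  have hmem : ∀ u : Cube d, u ∈ boot d r A (T u) := by
    intro u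
    obtain ⟨t0, ht0⟩ := hA
    have h0 : u ∈ boot d r A t0 := by rw [ht0]; trivial
    exact Nat.sInf_mem (⟨t0, h0⟩ : {t | u ∈ boot d r A t}.Nonempty)
  have key : ∀ v : Cube d,
      (Finset.univ.filter fun u => hammingDist u v = 1 ∧ T u + 2 ≤ T v).card ≤ r - 1 := by
    intro v
    by_cases hne : (Finset.univ.filter fun u => hammingDist u v = 1 ∧ T u + 2 ≤ T v).Nonempty
    · obtain ⟨u0, hu0⟩ := hne
      simp only [Finset.mem_filter] at hu0
      have htv : 2 ≤ T v := by omega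
      have hvnot : v ∉ boot d r A (T v - 1) := by
        intro h
        have h1 : T v ≤ T v - 1 := Nat.sInf_le h
        omega
      have heq : T v - 1 = (T v - 2) + 1 := by omega
      rw [heq] at hvnot
      have hvnot' : ¬ r ≤ {u : Cube d | hammingDist u v = 1 ∧ u ∈ boot d r A (T v - 2)}.ncard := by
        intro h
        exact hvnot (Or.inr h)
      have hsub : ↑(Finset.univ.filter fun u => hammingDist u v = 1 ∧ T u + 2 ≤ T v)
          ⊆ {u : Cube d | hammingDist u v = 1 ∧ u ∈ boot d r A (T v - 2)} := by
        intro u hu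
        simp only [Finset.coe_filter, Set.mem_setOf_eq, Finset.mem_univ, true_and] at hu ⊢
        exact ⟨hu.1, boot_mono d r A (by omega : T u ≤ T v - 2) (hmem u)⟩
      have hle := Set.ncard_le_ncard hsub (Set.toFinite _)
      rw [Set.ncard_coe_finset] at hle
      omega
    · rw [Finset.not_nonempty_iff_eq_empty] at hne
      simp [hne]
  set P : Finset (Cube d × Cube d) :=
    Finset.univ.filter (fun p => hammingDist p.1 p.2 = 1 ∧ T p.1 + 2 ≤ T p.2) with hP
  have hPcard : P.card ≤ (r - 1) * 2 ^ d := by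
    rw [Finset.card_eq_sum_card_fiberwise
      (f := Prod.snd) (t := Finset.univ) (fun p _ => Finset.mem_univ _)]
    have hfib : ∀ v : Cube d, (P.filter fun p => p.2 = v).card ≤ r - 1 := by
      intro v
      refine le_trans ?_ (key v)
      apply Finset.card_le_card_of_injOn (fun p => p.1)
      · intro p hp
        simp only [hP, Finset.mem_coe, Finset.mem_filter, Finset.mem_univ, true_and] at hp ⊢
        obtain ⟨⟨h1, h2⟩, h3⟩ := hp
        subst h3
        exact ⟨h1, h2⟩
      · intro p hp q hq hpq
        simp only [Finset.mem_coe, hP, Finset.mem_filter] at hp hq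
        exact Prod.ext hpq (hp.2.trans hq.2.symm)
    calc ∑ v : Cube d, (P.filter fun p => p.2 = v).card
        ≤ ∑ _v : Cube d, (r - 1) := Finset.sum_le_sum fun v _ => hfib v
      _ = 2 ^ d * (r - 1) := by
          rw [Finset.sum_const, smul_eq_mul]
          congr 1
          simp [Finset.card_univ]
      _ = (r - 1) * 2 ^ d := mul_comm _ _
  have hsubset : {e : Sym2 (Cube d) | ∃ u v : Cube d, e = s(u, v) ∧ hammingDist u v = 1 ∧
        (T u + 2 ≤ T v ∨ T v + 2 ≤ T u)} ⊆ Function.uncurry Sym2.mk '' (↑P : Set (Cube d × Cube d)) := by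
    rintro e ⟨u, v, rfl, hdist, h | h⟩
    · exact ⟨(u, v), by simp [hP, hdist, h], rfl⟩
    · refine ⟨(v, u), by simp [hP, hammingDist_comm v u, hdist, h], ?_⟩
      exact Sym2.eq_swap
  calc {e : Sym2 (Cube d) | ∃ u v : Cube d, e = s(u, v) ∧ hammingDist u v = 1 ∧
        (T u + 2 ≤ T v ∨ T v + 2 ≤ T u)}.ncard
      ≤ (Function.uncurry Sym2.mk '' (↑P : Set (Cube d × Cube d))).ncard := Set.ncard_le_ncard hsubset (Set.toFinite _)
    _ ≤ (↑P : Set (Cube d × Cube d)).ncard := Set.ncard_image_le (Set.toFinite _)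
    _ = P.card := Set.ncard_coe_finset P
    _ ≤ (r - 1) * 2 ^ d := hPcard
end

section
/- Let d ≥ 15 be odd, d'' = d − 9, and let S be a 3-snake of length T ≥ 3 in Q_{d''}. Then every vertex i_1 ∈ I_0 has exactly one other vertex i_2 ∈ I_0 \ {i_1} at Hamming distance at most 2, namely the vertex obtained from i_1 by exchanging the values of the two coordinates in positions 2i+2 and 2i+3 (where i is the index with the last d'' coordinates of i_1 lying in S^i); this i_2 is at Hamming distance exactly 2 from i_1 and differs from i_1 only in coordinates among positions 4 through 9. -/
lemma embed9_lt {d : ℕ} (s : Finset ℕ) (x : Cube (d - 9)) (j : Fin d) (h : j.val < 9) :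
    embed9 d s x j = decide (j.val ∈ s) := dif_pos h

lemma embed9_ge {d : ℕ} (s : Finset ℕ) (x : Cube (d - 9)) (j : Fin d) (h : ¬ j.val < 9) :
    embed9 d s x j = x ⟨j.val - 9, by have := j.isLt; omega⟩ := dif_neg h

lemma hd_split (d : ℕ) (hd : 15 ≤ d) (s s' : Finset ℕ) (x x' : Cube (d - 9)) :
    hammingDist (embed9 d s x) (embed9 d s' x') =
      ((Finset.range 9).filter (fun j => decide (j ∈ s) ≠ decide (j ∈ s'))).card
      + hammingDist x x' := by
  classical
  show (Finset.univ.filter fun j : Fin d => embed9 d s x j ≠ embed9 d s' x' j).card = _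
  have hsplit : (Finset.univ.filter fun j : Fin d => embed9 d s x j ≠ embed9 d s' x' j)
      = ((Finset.univ.filter fun j : Fin d =>
            (embed9 d s x j ≠ embed9 d s' x' j) ∧ j.val < 9)
        ∪ (Finset.univ.filter fun j : Fin d =>
            (embed9 d s x j ≠ embed9 d s' x' j) ∧ ¬ j.val < 9)) := by
    ext j
    simp only [Finset.mem_filter, Finset.mem_union, Finset.mem_univ, true_and]
    tauto
  have hdisj : Disjoint
      (Finset.univ.filter fun j : Fin d =>
        (embed9 d s x j ≠ embed9 d s' x' j) ∧ j.val < 9)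
      (Finset.univ.filter fun j : Fin d =>
        (embed9 d s x j ≠ embed9 d s' x' j) ∧ ¬ j.val < 9) := by
    rw [Finset.disjoint_left]
    intro a ha ha'
    simp only [Finset.mem_filter] at ha ha'
    exact ha'.2.2 ha.2.2
  rw [hsplit, Finset.card_union_of_disjoint hdisj]
  congr 1
  · refine Finset.card_bij' (fun a _ => a.val)
      (fun b hb => (⟨b, by have := Finset.mem_range.1 (Finset.mem_filter.1 hb).1; omega⟩ : Fin d))
      ?_ ?_ ?_ ?_
    · intro a ha
      simp only [Finset.mem_filter, Finset.mem_univ, true_and] at ha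
      rcases ha with ⟨hne, hlt⟩
      rw [embed9_lt s x a hlt, embed9_lt s' x' a hlt] at hne
      simp only [Finset.mem_filter, Finset.mem_range]
      exact ⟨hlt, hne⟩
    · intro b hb
      simp only [Finset.mem_filter, Finset.mem_range] at hb
      have hlt : b < 9 := hb.1
      simp only [Finset.mem_filter, Finset.mem_univ, true_and]
      constructor
      · rw [embed9_lt s x _ hlt, embed9_lt s' x' _ hlt]
        exact hb.2
      · exact hlt
    · intro a _; rfl
    · intro b _; rfl
  · rw [show hammingDist x x'
        = (Finset.univ.filter fun k : Fin (d - 9) => x k ≠ x' k).card from rfl]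
    refine Finset.card_bij'
      (fun (a : Fin d) (ha : a ∈ _) =>
        (⟨a.val - 9, by have := a.isLt; omega⟩ : Fin (d - 9)))
      (fun (b : Fin (d - 9)) _ => (⟨b.val + 9, by have := b.isLt; omega⟩ : Fin d))
      ?_ ?_ ?_ ?_
    · intro a ha
      simp only [Finset.mem_filter, Finset.mem_univ, true_and] at ha
      rcases ha with ⟨hne, hge⟩
      rw [embed9_ge s x a hge, embed9_ge s' x' a hge] at hne
      simp only [Finset.mem_filter, Finset.mem_univ, true_and]
      exact hne
    · intro b hb
      simp only [Finset.mem_filter, Finset.mem_univ, true_and] at hb ⊢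
      have h9 : ¬ ((⟨b.val + 9, by have := b.isLt; omega⟩ : Fin d) : Fin d).val < 9 := by
        simp
      constructor
      · rw [embed9_ge s x _ h9, embed9_ge s' x' _ h9]
        simpa using hb
      · exact h9
    · intro a ha
      simp only [Finset.mem_filter, Finset.mem_univ, true_and] at ha
      apply Fin.ext
      simp only
      omega
    · intro b _
      apply Fin.ext
      simp only
      omega

lemma filter9_same (p : ℕ) :
    ((Finset.range 9).filter
      (fun j => decide (j ∈ ({p} : Finset ℕ)) ≠ decide (j ∈ ({p} : Finset ℕ)))).card = 0 := by
  simp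

lemma filter9_ne (p q : ℕ) (hp : p < 9) (hq : q < 9) (hne : p ≠ q) :
    ((Finset.range 9).filter
      (fun j => decide (j ∈ ({p} : Finset ℕ)) ≠ decide (j ∈ ({q} : Finset ℕ)))).card = 2 := by
  have hset : ((Finset.range 9).filter
      (fun j => decide (j ∈ ({p} : Finset ℕ)) ≠ decide (j ∈ ({q} : Finset ℕ))))
      = ({p, q} : Finset ℕ) := by
    ext j
    simp only [Finset.mem_filter, Finset.mem_range, Finset.mem_singleton, Finset.mem_insert,
      ne_eq, decide_eq_decide]
    constructor
    · rintro ⟨-, h⟩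
      by_cases hjp : j = p
      · exact Or.inl hjp
      · by_cases hjq : j = q
        · exact Or.inr hjq
        · exact absurd (iff_of_false hjp hjq) h
    · rintro (rfl | rfl)
      · exact ⟨hp, fun h => hne (h.1 rfl)⟩
      · exact ⟨hq, fun h => hne (h.2 rfl).symm⟩
  rw [hset, Finset.card_insert_of_notMem (by simpa using hne), Finset.card_singleton]

lemma tail_idx_eq (d'' T : ℕ) (S : ℕ → Cube d'') (hS : IsSnake d'' 3 T S)
    (i i' : ℕ) (hi1 : 1 ≤ i) (hi3 : i ≤ 3) (hi1' : 1 ≤ i') (hi3' : i' ≤ 3)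
    (x : Cube d'') (hx : x ∈ SnakeTail d'' T S i) (hx' : x ∈ SnakeTail d'' T S i') :
    i = i' := by
  obtain ⟨j, hj, rfl⟩ := hx
  obtain ⟨j', hj', hEq⟩ := hx'
  have := hS.2.1 (T - i - 3 * j) (T - i' - 3 * j') (by omega) (by omega) hEq
  omega

lemma tail_close (d'' T : ℕ) (S : ℕ → Cube d'') (hS : IsSnake d'' 3 T S)
    (i : ℕ) (x x' : Cube d'') (hx : x ∈ SnakeTail d'' T S i) (hx' : x' ∈ SnakeTail d'' T S i)
    (h : hammingDist x x' ≤ 2) : x = x' := by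
  obtain ⟨j, hj, rfl⟩ := hx
  obtain ⟨j', hj', rfl⟩ := hx'
  rcases Nat.lt_trichotomy j j' with hlt | rfl | hlt
  · have h3 := hS.2.2 (T - i - 3 * j') (T - i - 3 * j) (by omega) (by omega)
    rw [hammingDist_comm] at h
    omega
  · rfl
  · have h3 := hS.2.2 (T - i - 3 * j) (T - i - 3 * j') (by omega) (by omega)
    omega

lemma embed9_ne_of_ne (d : ℕ) (hd : 15 ≤ d) (p q : ℕ) (hp : p < 9) (hne : p ≠ q)
    (x x' : Cube (d - 9)) : embed9 d ({p} : Finset ℕ) x ≠ embed9 d ({q} : Finset ℕ) x' := by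
  intro h
  have := congrFun h ⟨p, by omega⟩
  rw [embed9_lt _ _ _ hp, embed9_lt _ _ _ hp] at this
  simp only [Finset.mem_singleton] at this
  simp [hne] at this

lemma i0_close (d : ℕ) (hd : 15 ≤ d) (T : ℕ) (S : ℕ → Cube (d - 9))
    (hS : IsSnake (d - 9) 3 T S) (i : ℕ) (hi1 : 1 ≤ i) (hi3 : i ≤ 3)
    (x : Cube (d - 9)) (hx : x ∈ SnakeTail (d - 9) T S i)
    (p q : ℕ) (hpq : (p = 2 * i + 1 ∧ q = 2 * i + 2) ∨ (p = 2 * i + 2 ∧ q = 2 * i + 1))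
    (v : Cube d) (hv : v ∈ I0 d T S)
    (hdist : hammingDist (embed9 d ({p} : Finset ℕ) x) v ≤ 2) :
    v = embed9 d ({p} : Finset ℕ) x ∨ v = embed9 d ({q} : Finset ℕ) x := by
  obtain ⟨i', hi', x', hx', hv⟩ := hv
  have hi'' : 1 ≤ i' ∧ i' ≤ 3 := by
    rcases hi' with rfl | rfl | rfl <;> omega
  -- v = embed9 d {r} x' with r ∈ {2i'+1, 2i'+2}
  obtain ⟨r, hr, rfl⟩ : ∃ r : ℕ, (r = 2 * i' + 1 ∨ r = 2 * i' + 2) ∧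
      v = embed9 d ({r} : Finset ℕ) x' := by
    rcases hv with rfl | rfl
    · exact ⟨2 * i' + 1, Or.inl rfl, rfl⟩
    · exact ⟨2 * i' + 2, Or.inr rfl, rfl⟩
  rw [hd_split d (by omega)] at hdist
  by_cases hrp : r = p
  · -- same first coordinates: x and x' close, same tail
    subst hrp
    have hii : i = i' := by omega
    subst hii
    rw [filter9_same] at hdist
    have : x = x' := tail_close _ _ _ hS i x x' hx hx' (by omega)
    exact Or.inl (by rw [this])
  · -- different singleton: contributes 2, so x = x'
    have hcard := filter9_ne r p (by omega) (by omega) hrp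
    rw [show ((Finset.range 9).filter
        (fun j => decide (j ∈ ({p} : Finset ℕ)) ≠ decide (j ∈ ({r} : Finset ℕ)))).card = 2 by
      rw [← hcard]; congr 1; ext j; simp only [Finset.mem_filter]; tauto] at hdist
    have hxx : x = x' := by
      have : hammingDist x x' = 0 := by omega
      exact hammingDist_eq_zero.mp this
    subst hxx
    have hii : i = i' := by
      obtain ⟨j, hj, rfl⟩ := hx
      obtain ⟨j', hj', hEq⟩ := hx'
      have := hS.2.1 (T - i - 3 * j) (T - i' - 3 * j') (by omega) (by omega) hEq
      omega
    subst hii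
    have hrq : r = q := by omega
    exact Or.inr (by rw [hrq])

/-- Let `d ≥ 15` be odd, `d'' = d − 9`, and let `S` be a `3`-snake of
length `T ≥ 3` in `Q_{d''}`. Every vertex `i₁ ∈ I_0` has exactly one other vertex
`i₂ ∈ I_0` at Hamming distance at most `2`, namely the one obtained by exchanging the two
coordinates in (1-indexed) positions `2i+2` and `2i+3`; it is at distance exactly `2`
from `i₁` and differs from `i₁` only in coordinates among positions 4 through 9. -/
theorem stmt17 (d : ℕ) (hd : 15 ≤ d) (hodd : Odd d) (T : ℕ) (hT : 3 ≤ T)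
    (S : ℕ → Cube (d - 9)) (hS : IsSnake (d - 9) 3 T S) :
    ∀ i ∈ ({1, 2, 3} : Set ℕ), ∀ x ∈ SnakeTail (d - 9) T S i,
      hammingDist (embed9 d {2 * i + 1} x) (embed9 d {2 * i + 2} x) = 2 ∧
      (∀ j : Fin d, embed9 d {2 * i + 1} x j ≠ embed9 d {2 * i + 2} x j →
        3 ≤ j.val ∧ j.val ≤ 8) ∧
      {v | v ∈ I0 d T S ∧ v ≠ embed9 d {2 * i + 1} x ∧
          hammingDist (embed9 d {2 * i + 1} x) v ≤ 2} =
        {embed9 d {2 * i + 2} x} ∧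
      {v | v ∈ I0 d T S ∧ v ≠ embed9 d {2 * i + 2} x ∧
          hammingDist (embed9 d {2 * i + 2} x) v ≤ 2} =
        {embed9 d {2 * i + 1} x} := by
  intro i hi x hx
  have hi13 : 1 ≤ i ∧ i ≤ 3 := by
    rcases hi with rfl | rfl | rfl <;> omega
  have hd9 : 9 ≤ d := by omega
  have hpq : (2 * i + 1 : ℕ) ≠ 2 * i + 2 := by omega
  have hdist2 : hammingDist (embed9 d ({2 * i + 1} : Finset ℕ) x)
      (embed9 d ({2 * i + 2} : Finset ℕ) x) = 2 := by
    rw [hd_split d hd, filter9_ne _ _ (by omega) (by omega) hpq, hammingDist_eq_zero.mpr rfl]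
  have hmem2 : embed9 d ({2 * i + 2} : Finset ℕ) x ∈ I0 d T S := ⟨i, hi, x, hx, Or.inr rfl⟩
  have hmem1 : embed9 d ({2 * i + 1} : Finset ℕ) x ∈ I0 d T S := ⟨i, hi, x, hx, Or.inl rfl⟩
  have hne12 := embed9_ne_of_ne d hd (2 * i + 1) (2 * i + 2) (by omega) hpq x x
  have hne21 := embed9_ne_of_ne d hd (2 * i + 2) (2 * i + 1) (by omega) (Ne.symm hpq) x x
  refine ⟨hdist2, ?_, ?_, ?_⟩
  · intro j hj
    by_cases h9 : j.val < 9
    · rw [embed9_lt _ _ _ h9, embed9_lt _ _ _ h9] at hj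
      simp only [Finset.mem_singleton, ne_eq, decide_eq_decide] at hj
      by_cases h1 : j.val = 2 * i + 1
      · omega
      · by_cases h2 : j.val = 2 * i + 2
        · omega
        · exact absurd (iff_of_false h1 h2) hj
    · rw [embed9_ge _ _ _ h9, embed9_ge _ _ _ h9] at hj
      exact absurd rfl hj
  · ext v
    simp only [Set.mem_setOf_eq, Set.mem_singleton_iff]
    constructor
    · rintro ⟨hv, hvne, hvd⟩
      rcases i0_close d hd T S hS i hi13.1 hi13.2 x hx (2 * i + 1) (2 * i + 2)
        (Or.inl ⟨rfl, rfl⟩) v hv hvd with h | h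
      · exact absurd h hvne
      · exact h
    · rintro rfl
      exact ⟨hmem2, Ne.symm hne12, le_of_eq hdist2⟩
  · ext v
    simp only [Set.mem_setOf_eq, Set.mem_singleton_iff]
    constructor
    · rintro ⟨hv, hvne, hvd⟩
      rcases i0_close d hd T S hS i hi13.1 hi13.2 x hx (2 * i + 2) (2 * i + 1)
        (Or.inr ⟨rfl, rfl⟩) v hv hvd with h | h
      · exact absurd h hvne
      · exact h
    · rintro rfl
      refine ⟨hmem1, Ne.symm hne21, ?_⟩
      rw [hammingDist_comm]
      exact le_of_eq hdist2
end
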